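/- Let A = (ρ_i)_{i∈A} be a totally ordered family in T such that the set of degrees {deg(ρ_i) : i ∈ A} is unbounded in ℕ. Then every polynomial f ∈ K[x] is A-stable, and consequently the stable limit ρ_A : K[x] → Λ∪{∞}, f ↦ max_i ρ_i(f), is a valuation belonging to T. -/

import Mathlib

open Polynomial

namespace MLV

variable {K : Type*} [Field K] {Λ : Type*} [AddCommGroup Λ] [LinearOrder Λ] [IsOrderedAddMonoid Λ]

/-- A valuation on the field `K` with values in `Λ∞ = WithTop Λ`. -/
structure FieldVal (K : Type*) (Λ : Type*) [Field K] [AddCommGroup Λ] [LinearOrder Λ] [IsOrderedAddMonoid Λ] where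
  v : K → WithTop Λ
  map_one' : v 1 = 0
  map_zero' : v 0 = ⊤
  ne_top' : ∀ a : K, a ≠ 0 → v a ≠ ⊤
  map_mul' : ∀ a b : K, v (a * b) = v a + v b
  map_add' : ∀ a b : K, min (v a) (v b) ≤ v (a + b)

/-- `μ` is a node of the tree `T = T(Λ)`: a valuation on `K[x]` with values in `Λ∞`
whose restriction to `K` is `v`. -/
def IsValT (v : FieldVal K Λ) (μ : Polynomial K → WithTop Λ) : Prop :=
  μ 1 = 0 ∧ μ 0 = ⊤ ∧ (∀ f g : Polynomial K, μ (f * g) = μ f + μ g) ∧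
    (∀ f g : Polynomial K, min (μ f) (μ g) ≤ μ (f + g)) ∧
    ∀ a : K, μ (C a) = v.v a

/-- `g ∼_μ h` : `μ(g - h) > μ(g)`. -/
def MuEquiv (μ : Polynomial K → WithTop Λ) (g h : Polynomial K) : Prop :=
  μ g < μ (g - h)

/-- `h ∣_μ g` : `g ∼_μ f * h` for some `f`. -/
def MuDvd (μ : Polynomial K → WithTop Λ) (h g : Polynomial K) : Prop :=
  ∃ f : Polynomial K, MuEquiv μ g (f * h)

/-- `g ∈ K[x] \ K` is `μ`-minimal if it `μ`-divides no nonzero polynomial of smaller degree. -/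
def IsMuMinimal (μ : Polynomial K → WithTop Λ) (g : Polynomial K) : Prop :=
  0 < g.natDegree ∧
    ∀ f : Polynomial K, f ≠ 0 → f.degree < g.degree → ¬ MuDvd μ g f

/-- `g` is `μ`-irreducible. -/
def IsMuIrreducible (μ : Polynomial K → WithTop Λ) (g : Polynomial K) : Prop :=
  μ g ≠ ⊤ ∧ (¬ ∃ f : Polynomial K, MuEquiv μ (f * g) 1) ∧
    ∀ f h : Polynomial K, MuDvd μ g (f * h) → MuDvd μ g f ∨ MuDvd μ g h

/-- A (Maclane-Vaquié) key polynomial for `μ`. -/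
def IsKeyPol (μ : Polynomial K → WithTop Λ) (φ : Polynomial K) : Prop :=
  φ.Monic ∧ IsMuMinimal μ φ ∧ IsMuIrreducible μ φ

/-- An inner node: a valuation admitting key polynomials. -/
def IsInnerNode (μ : Polynomial K → WithTop Λ) : Prop :=
  ∃ φ : Polynomial K, IsKeyPol μ φ

/-- `deg(μ)`: the minimal degree of a key polynomial for `μ`. -/
noncomputable def degOf (μ : Polynomial K → WithTop Λ) : ℕ :=
  sInf {n : ℕ | ∃ φ : Polynomial K, IsKeyPol μ φ ∧ φ.natDegree = n}

/-- A key polynomial of minimal degree. -/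
def IsMinKeyPol (μ : Polynomial K → WithTop Λ) (φ : Polynomial K) : Prop :=
  IsKeyPol μ φ ∧ ∀ ψ : Polynomial K, IsKeyPol μ ψ → φ.natDegree ≤ ψ.natDegree

/-- the class `[φ]_μ` of key polynomials `μ`-equivalent to `φ`. -/
def KeyPolClass (μ : Polynomial K → WithTop Λ) (φ : Polynomial K) : Set (Polynomial K) :=
  {ψ : Polynomial K | IsKeyPol μ ψ ∧ MuEquiv μ ψ φ}

/-- The coefficient `a_s` of the `φ`-expansion `f = Σ_s a_s φ^s` (for `φ` monic nonconstant). -/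
noncomputable def expCoeff (φ f : Polynomial K) (s : ℕ) : Polynomial K :=
  (f /ₘ φ ^ s) %ₘ φ

/-- The augmented valuation `[μ; φ, γ]`, acting on `φ`-expansions by
`ν(Σ_s a_s φ^s) = min_s (μ(a_s) + s γ)`. -/
noncomputable def augVal (μ : Polynomial K → WithTop Λ) (φ : Polynomial K)
    (γ : WithTop Λ) (f : Polynomial K) : WithTop Λ :=
  (Finset.range (f.natDegree + 1)).inf'
    (Finset.nonempty_range_iff.mpr (Nat.succ_ne_zero _))
    fun s => μ (expCoeff φ f s) + s • γ

/-- The depth-zero valuation `ω_{a,δ}`, acting on `(x-a)`-expansions by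
`ω(Σ_s a_s (x-a)^s) = min_s (v(a_s) + s δ)`. -/
noncomputable def omegaVal (v : FieldVal K Λ) (a : K) (δ : WithTop Λ)
    (f : Polynomial K) : WithTop Λ :=
  (Finset.range (f.natDegree + 1)).inf'
    (Finset.nonempty_range_iff.mpr (Nat.succ_ne_zero _))
    fun s => v.v ((taylor a f).coeff s) + s • δ

/-- The tangent direction `t(μ,ν)`: monic polynomials of minimal degree with `μ(φ) < ν(φ)`. -/
def TangentDir (μ ν : Polynomial K → WithTop Λ) : Set (Polynomial K) :=
  {φ : Polynomial K | φ.Monic ∧ μ φ < ν φ ∧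
    ∀ ψ : Polynomial K, ψ.Monic → μ ψ < ν ψ → φ.natDegree ≤ ψ.natDegree}

/-- The set of finite values of `μ`. -/
def valSet (μ : Polynomial K → WithTop Λ) : Set Λ :=
  {γ : Λ | ∃ f : Polynomial K, μ f = (γ : WithTop Λ)}

/-- The value group `Γ_μ`. -/
def valGroup (μ : Polynomial K → WithTop Λ) : AddSubgroup Λ :=
  AddSubgroup.closure (valSet μ)

/-- `Γ = v(K^*)` as a subset of `Λ`. -/
def gammaSet (v : FieldVal K Λ) : Set Λ :=
  {γ : Λ | ∃ a : K, v.v a = (γ : WithTop Λ)}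

/-- The value group `Γ` of the base field valuation. -/
def baseGroup (v : FieldVal K Λ) : AddSubgroup Λ :=
  AddSubgroup.closure (gammaSet v)

/-- `μ` is commensurable over `v` : `Γ_μ/Γ` is torsion. -/
def IsCommensurable (v : FieldVal K Λ) (μ : Polynomial K → WithTop Λ) : Prop :=
  ∀ γ : Λ, γ ∈ valGroup μ → ∃ n : ℕ, 0 < n ∧ n • γ ∈ baseGroup v

/-- `Γ_μ^0 = {μ(a) : a ∈ K[x], 0 ≤ deg(a) < deg(μ)}`. -/
noncomputable def degZeroSet (μ : Polynomial K → WithTop Λ) : Set Λ :=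
  {δ : Λ | ∃ a : Polynomial K, a ≠ 0 ∧ a.natDegree < degOf μ ∧ μ a = (δ : WithTop Λ)}

/-- Equivalence of valuations: an order-preserving isomorphism `ι : Γ_μ → Γ_ν`
with `ν = ι ∘ μ`. -/
def ValEquiv (μ ν : Polynomial K → WithTop Λ) : Prop :=
  ∃ ι : valGroup μ ≃+ valGroup ν,
    Monotone ι ∧ (∀ f : Polynomial K, μ f = ⊤ ↔ ν f = ⊤) ∧
    ∀ (f : Polynomial K) (γ : Λ) (h : μ f = (γ : WithTop Λ)),
      ν f = ((ι ⟨γ, AddSubgroup.subset_closure ⟨f, h⟩⟩ : Λ) : WithTop Λ)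

/-- `β ∼_sme γ` : an order-preserving isomorphism `⟨Γ,β⟩ → ⟨Γ,γ⟩` fixing `Γ`
and mapping `β` to `γ`. -/
def SmeEquiv (v : FieldVal K Λ) (β γ : Λ) : Prop :=
  ∃ ι : (AddSubgroup.closure (gammaSet v ∪ {β}) : AddSubgroup Λ) ≃+
      (AddSubgroup.closure (gammaSet v ∪ {γ}) : AddSubgroup Λ),
    Monotone ι ∧
    (∀ (a : Λ) (ha : a ∈ gammaSet v),
      ((ι ⟨a, AddSubgroup.subset_closure (Set.mem_union_left _ ha)⟩ : Λ) = a)) ∧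
    ((ι ⟨β, AddSubgroup.subset_closure (Set.mem_union_right _ rfl)⟩ : Λ) = γ)

section Families

variable {ι : Type*} [LinearOrder ι]

/-- A totally ordered family of inner nodes of `T`, indexed order-isomorphically by a
totally ordered set, containing no maximal element. -/
def IsTOFamily (v : FieldVal K Λ) (ρ : ι → Polynomial K → WithTop Λ) : Prop :=
  (∀ i, IsValT v (ρ i)) ∧ (∀ i, IsInnerNode (ρ i)) ∧ StrictMono ρ ∧
    ∀ i : ι, ∃ j : ι, i < j

/-- `f` is `A`-stable: the values `ρ_i(f)` are eventually constant. -/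
def IsStablePoly (ρ : ι → Polynomial K → WithTop Λ) (f : Polynomial K) : Prop :=
  ∃ i : ι, ∀ j : ι, i ≤ j → ρ j f = ρ i f

/-- `β` is the stable value `ρ_A(f)`. -/
def IsStableVal (ρ : ι → Polynomial K → WithTop Λ) (f : Polynomial K)
    (β : WithTop Λ) : Prop :=
  ∃ i : ι, ∀ j : ι, i ≤ j → ρ j f = β

open Classical in
/-- The stability function `ρ_A` (junk value `⊤` on unstable polynomials). -/
noncomputable def stableVal (ρ : ι → Polynomial K → WithTop Λ) (f : Polynomial K) :
    WithTop Λ :=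
  if h : ∃ β : WithTop Λ, IsStableVal ρ f β then h.choose else ⊤

/-- The family has stable degree `m`. -/
def HasStableDeg (ρ : ι → Polynomial K → WithTop Λ) (m : ℕ) : Prop :=
  ∃ i : ι, ∀ j : ι, i ≤ j → degOf (ρ j) = m

/-- A continuous family: a totally ordered family of eventually constant degree. -/
def IsContFamily (v : FieldVal K Λ) (ρ : ι → Polynomial K → WithTop Λ) : Prop :=
  IsTOFamily v ρ ∧ ∃ m : ℕ, HasStableDeg ρ m

/-- The stable group `Γ_C`: stable values of nonzero stable polynomials. -/
def stableSet (ρ : ι → Polynomial K → WithTop Λ) : Set Λ :=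
  {δ : Λ | ∃ f : Polynomial K, f ≠ 0 ∧ IsStableVal ρ f (δ : WithTop Λ)}

/-- A limit key polynomial: monic, unstable, of minimal degree among unstable polynomials. -/
def IsLimKeyPol (ρ : ι → Polynomial K → WithTop Λ) (φ : Polynomial K) : Prop :=
  φ.Monic ∧ ¬ IsStablePoly ρ φ ∧
    ∀ f : Polynomial K, ¬ IsStablePoly ρ f → φ.natDegree ≤ f.natDegree

/-- An essential continuous family: `m(C) < m_∞(C) < ∞`. -/
def IsEssential (v : FieldVal K Λ) (ρ : ι → Polynomial K → WithTop Λ) : Prop :=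
  IsTOFamily v ρ ∧
    ∃ m : ℕ, HasStableDeg ρ m ∧
      ∃ φ : Polynomial K, IsLimKeyPol ρ φ ∧ m < φ.natDegree

/-- The limit augmentation `[C; φ, γ]`, acting on `φ`-expansions by
`ν(Σ_s a_s φ^s) = min_s (ρ_C(a_s) + s γ)`. -/
noncomputable def limAugVal (ρ : ι → Polynomial K → WithTop Λ) (φ : Polynomial K)
    (γ : WithTop Λ) (f : Polynomial K) : WithTop Λ :=
  (Finset.range (f.natDegree + 1)).inf'
    (Finset.nonempty_range_iff.mpr (Nat.succ_ne_zero _))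
    fun s => stableVal ρ (expCoeff φ f s) + s • γ

/-- Equivalence of totally ordered families: mutual cofinality. -/
def FamEquiv {κ : Type*} [LinearOrder κ] (ρ : ι → Polynomial K → WithTop Λ)
    (σ : κ → Polynomial K → WithTop Λ) : Prop :=
  (∀ i : ι, ∃ j : κ, ρ i ≤ σ j) ∧ ∀ j : κ, ∃ i : ι, σ j ≤ ρ i

end Families

end MLV

open MLV

namespace MLV

variable {K : Type*} [Field K] {Λ : Type*} [AddCommGroup Λ] [LinearOrder Λ] [IsOrderedAddMonoid Λ]

lemma FieldVal.v_neg_one (v : FieldVal K Λ) : v.v (-1) = 0 := by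
  have h := v.map_mul' (-1) (-1)
  rw [neg_mul_neg, one_mul, v.map_one'] at h
  cases hx : v.v (-1) with
  | top => rw [hx] at h; simp at h
  | coe a =>
    rw [hx] at h
    have h2 : a + a = 0 := by exact_mod_cast h.symm
    have h3 : a = 0 := by
      rcases lt_trichotomy a 0 with h4 | h4 | h4
      · exfalso; have h5 := add_lt_add h4 h4; rw [h2, add_zero] at h5; exact lt_irrefl _ h5
      · exact h4
      · exfalso; have h5 := add_lt_add h4 h4; rw [h2, add_zero] at h5; exact lt_irrefl _ h5
    simp [h3]

section ValT

variable {v : FieldVal K Λ} {μ ν : Polynomial K → WithTop Λ}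

lemma IsValT.vone (h : IsValT v μ) : μ 1 = 0 := h.1
lemma IsValT.vzero (h : IsValT v μ) : μ 0 = ⊤ := h.2.1
lemma IsValT.vmul (h : IsValT v μ) : ∀ f g, μ (f * g) = μ f + μ g := h.2.2.1
lemma IsValT.vadd (h : IsValT v μ) : ∀ f g, min (μ f) (μ g) ≤ μ (f + g) := h.2.2.2.1
lemma IsValT.vC (h : IsValT v μ) : ∀ a, μ (Polynomial.C a) = v.v a := h.2.2.2.2

lemma IsValT.vneg (hμ : IsValT v μ) (g : Polynomial K) : μ (-g) = μ g := by
  have hg : -g = Polynomial.C (-1) * g := by rw [map_neg, map_one, neg_one_mul]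
  rw [hg, hμ.vmul, hμ.vC, FieldVal.v_neg_one, zero_add]

lemma IsValT.eq_of_lt_sub (hμ : IsValT v μ) {a b : Polynomial K}
    (h : μ a < μ (a - b)) : μ b = μ a := by
  refine le_antisymm ?_ ?_
  · by_contra hcon
    push_neg at hcon
    have h2 := hμ.vadd b (a - b)
    rw [show b + (a - b) = a from by ring] at h2
    exact absurd h2 (not_le.mpr (lt_min hcon h))
  · have h2 := hμ.vadd a (-(a - b))
    rw [hμ.vneg, show a + -(a - b) = b from by ring, min_eq_left h.le] at h2
    exact h2

lemma monicize (hμ : IsValT v μ) (hν : IsValT v ν) {f : Polynomial K} (hf : f ≠ 0)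
    (h : μ f < ν f) :
    ∃ g : Polynomial K, g.Monic ∧ μ g < ν g ∧ g.natDegree = f.natDegree := by
  have hc0 : f.leadingCoeff⁻¹ ≠ 0 := inv_ne_zero (Polynomial.leadingCoeff_ne_zero.mpr hf)
  refine ⟨f * Polynomial.C f.leadingCoeff⁻¹, Polynomial.monic_mul_leadingCoeff_inv hf, ?_, ?_⟩
  · rw [hμ.vmul, hν.vmul, hμ.vC, hν.vC]
    exact WithTop.add_lt_add_right (v.ne_top' _ hc0) h
  · exact Polynomial.natDegree_mul_C hc0

lemma tangent_dvd_iff (hμ : IsValT v μ) (hν : IsValT v ν) (hle : ∀ f, μ f ≤ ν f)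
    {φ : Polynomial K} (hm : φ.Monic) (hφ : μ φ < ν φ)
    (hmin : ∀ g : Polynomial K, g.Monic → μ g < ν g → φ.natDegree ≤ g.natDegree) :
    ∀ f : Polynomial K, MuDvd μ φ f ↔ μ f < ν f := by
  have hsmall : ∀ r : Polynomial K, r.degree < φ.degree → μ r = ν r := by
    intro r hr
    rcases eq_or_ne r 0 with rfl | hr0
    · rw [hμ.vzero, hν.vzero]
    · by_contra hne
      have hlt : μ r < ν r := lt_of_le_of_ne (hle r) hne
      obtain ⟨g, hgm, hglt, hgd⟩ := monicize hμ hν hr0 hlt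
      have h1 := hmin g hgm hglt
      rw [hgd] at h1
      have h2 := Polynomial.natDegree_lt_natDegree hr0 hr
      omega
  have fwd : ∀ f, MuDvd μ φ f → μ f < ν f := by
    rintro f ⟨q, hq⟩
    have hqf : μ (q * φ) = μ f := hμ.eq_of_lt_sub hq
    have hft : μ f ≠ ⊤ := ne_top_of_lt hq
    have hqt : μ q ≠ ⊤ := by
      intro h
      rw [hμ.vmul, h] at hqf
      simp at hqf
      exact hft hqf.symm
    have h1 : μ f < ν (q * φ) := by
      calc μ f = μ (q * φ) := hqf.symm
        _ = μ q + μ φ := hμ.vmul q φ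
        _ < μ q + ν φ := WithTop.add_lt_add_left hqt hφ
        _ ≤ ν q + ν φ := add_le_add_left (hle q) _
        _ = ν (q * φ) := (hν.vmul q φ).symm
    have h2 : μ f < ν (f - q * φ) := lt_of_lt_of_le hq (hle _)
    have h3 := hν.vadd (f - q * φ) (q * φ)
    rw [show f - q * φ + q * φ = f from by ring] at h3
    exact lt_of_lt_of_le (lt_min h2 h1) h3
  have bwd : ∀ f, μ f < ν f → MuDvd μ φ f := by
    intro f hf
    set q := f /ₘ φ with hqdef
    set r := f %ₘ φ with hrdef
    have hfd : r + φ * q = f := Polynomial.modByMonic_add_div f φ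
    have hrd : r.degree < φ.degree := Polynomial.degree_modByMonic_lt f hm
    have hrv : μ r = ν r := hsmall r hrd
    have key : μ f < μ r := by
      by_contra hcon
      push_neg at hcon
      have hνr : ν r < ν f := by rw [← hrv]; exact lt_of_le_of_lt hcon hf
      have hrt : ν r ≠ ⊤ := ne_top_of_lt hνr
      have hqφr : μ r ≤ μ (φ * q) := by
        have h2 := hμ.vadd f (-r)
        rw [hμ.vneg, show f + -r = φ * q from by rw [← hfd]; ring] at h2
        rwa [min_eq_right hcon] at h2
      have hνφq : ν r < ν (φ * q) := by
        rcases eq_or_ne (μ (φ * q)) ⊤ with htop | hfin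
        · have h4 := hle (φ * q)
          rw [htop, top_le_iff] at h4
          rw [h4]
          exact lt_of_le_of_ne le_top hrt
        · have hqt : μ q ≠ ⊤ := by
            intro h
            rw [hμ.vmul, h] at hfin
            simp at hfin
          calc ν r = μ r := hrv.symm
            _ ≤ μ (φ * q) := hqφr
            _ = μ φ + μ q := hμ.vmul φ q
            _ < ν φ + μ q := WithTop.add_lt_add_right hqt hφ
            _ ≤ ν φ + ν q := by exact add_le_add_right (hle q) _
            _ = ν (φ * q) := (hν.vmul φ q).symm
      have h3 := hν.vadd f (-(φ * q))
      rw [hν.vneg, show f + -(φ * q) = r from by rw [← hfd]; ring] at h3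
      exact absurd h3 (not_le.mpr (lt_min hνr hνφq))
    exact ⟨q, by rw [MuEquiv, show f - q * φ = r from by rw [← hfd]; ring]; exact key⟩
  exact fun f => ⟨fwd f, bwd f⟩

lemma tangent_keyPol (hμ : IsValT v μ) (hν : IsValT v ν) (hle : ∀ f, μ f ≤ ν f)
    {φ : Polynomial K} (hm : φ.Monic) (hφ : μ φ < ν φ)
    (hmin : ∀ g : Polynomial K, g.Monic → μ g < ν g → φ.natDegree ≤ g.natDegree) :
    IsKeyPol μ φ := by
  have hiff := tangent_dvd_iff hμ hν hle hm hφ hmin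
  have hdeg : 0 < φ.natDegree := by
    by_contra h
    push_neg at h
    obtain ⟨a, ha⟩ := Polynomial.natDegree_eq_zero.mp (Nat.le_zero.mp h)
    have ha1 : a = 1 := by
      have := hm
      rw [← ha] at this
      simpa [Polynomial.Monic, Polynomial.leadingCoeff] using this
    rw [ha1, map_one] at ha
    rw [← ha, hμ.vone, hν.vone] at hφ
    exact lt_irrefl _ hφ
  refine ⟨hm, ⟨hdeg, ?_⟩, ne_top_of_lt hφ, ?_, ?_⟩
  · intro f hf0 hfd hdvd
    have hlt := (hiff f).mp hdvd
    obtain ⟨g, hgm, hglt, hgd⟩ := monicize hμ hν hf0 hlt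
    have h1 := hmin g hgm hglt
    rw [hgd] at h1
    have h2 := Polynomial.natDegree_lt_natDegree hf0 hfd
    omega
  · rintro ⟨f, hf⟩
    have h1 : μ 1 = μ (f * φ) := hμ.eq_of_lt_sub hf
    have hdvd : MuDvd μ φ 1 := by
      refine ⟨f, ?_⟩
      show μ 1 < μ (1 - f * φ)
      rw [show (1 : Polynomial K) - f * φ = -(f * φ - 1) from by ring, hμ.vneg, h1]
      exact hf
    have := (hiff 1).mp hdvd
    rw [hμ.vone, hν.vone] at this
    exact lt_irrefl _ this
  · intro f h hdvd
    have hlt := (hiff (f * h)).mp hdvd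
    rw [hμ.vmul, hν.vmul] at hlt
    by_cases hf : μ f < ν f
    · exact Or.inl ((hiff f).mpr hf)
    · have hfe : μ f = ν f := le_antisymm (hle f) (not_lt.mp hf)
      right
      refine (hiff h).mpr ?_
      rw [← hfe] at hlt
      have hft : μ f ≠ ⊤ := by
        intro ht
        rw [ht] at hlt
        simp at hlt
      exact (WithTop.add_lt_add_iff_left hft).mp hlt

end ValT

section Stable

variable {ι : Type*} [LinearOrder ι]

lemma stableVal_eq {ρ : ι → Polynomial K → WithTop Λ} {f : Polynomial K} {β : WithTop Λ}
    (h : IsStableVal ρ f β) : stableVal ρ f = β := by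
  have hex : ∃ γ : WithTop Λ, IsStableVal ρ f γ := ⟨β, h⟩
  rw [stableVal, dif_pos hex]
  obtain ⟨i₁, h1⟩ := hex.choose_spec
  obtain ⟨i₂, h2⟩ := h
  rw [← h1 (max i₁ i₂) (le_max_left _ _), h2 (max i₁ i₂) (le_max_right _ _)]

end Stable

end MLV

/-- A totally ordered family of unbounded degree has a stable limit: every polynomial is
`A`-stable and the function `ρ_A(f) = max_i ρ_i(f)` is a valuation belonging to `T`. -/
theorem statement_7 {K : Type*} [Field K] {Λ : Type*} [AddCommGroup Λ] [LinearOrder Λ] [IsOrderedAddMonoid Λ] {ι : Type*} [LinearOrder ι] [Nonempty ι]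
    (v : FieldVal K Λ) (ρ : ι → Polynomial K → WithTop Λ) (hA : IsTOFamily v ρ)
    (hub : ∀ N : ℕ, ∃ i : ι, N < degOf (ρ i)) :
    (∀ f : Polynomial K, IsStablePoly ρ f) ∧
    (∀ (f : Polynomial K) (i : ι), ρ i f ≤ stableVal ρ f) ∧
    (∀ f : Polynomial K, ∃ i : ι, ρ i f = stableVal ρ f) ∧
    IsValT v (fun f => stableVal ρ f) := by
  obtain ⟨hval, hinner, hsm, hnomax⟩ := hA
  have hmono : Monotone ρ := hsm.monotone
  -- every polynomial is stable, with explicit stabilization index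
  have hstab : ∀ f : Polynomial K, ∃ i : ι, ∀ j : ι, i ≤ j → ρ j f = ρ i f := by
    intro f
    rcases eq_or_ne f 0 with rfl | hf0
    · exact ⟨Classical.arbitrary ι, fun j _ => by rw [(hval j).vzero, (hval _).vzero]⟩
    obtain ⟨i, hi⟩ := hub f.natDegree
    refine ⟨i, fun j hij => ?_⟩
    rcases eq_or_lt_of_le hij with rfl | hij'
    · rfl
    by_contra hne
    have hle : ∀ g, ρ i g ≤ ρ j g := fun g => hmono hij g
    have hflt : ρ i f < ρ j f := lt_of_le_of_ne (hle f) (fun h => hne h.symm)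
    -- minimal degree monic polynomial with strictly increasing value
    set S : Set ℕ := {n | ∃ g : Polynomial K, g.Monic ∧ ρ i g < ρ j g ∧ g.natDegree = n} with hS
    obtain ⟨g₀, hg₀m, hg₀lt, hg₀d⟩ := monicize (hval i) (hval j) hf0 hflt
    have hSne : S.Nonempty := ⟨g₀.natDegree, g₀, hg₀m, hg₀lt, rfl⟩
    obtain ⟨φ, hφm, hφlt, hφd⟩ : ∃ φ : Polynomial K,
        φ.Monic ∧ ρ i φ < ρ j φ ∧ φ.natDegree = sInf S := Nat.sInf_mem hSne
    have hmin : ∀ g : Polynomial K, g.Monic → ρ i g < ρ j g → φ.natDegree ≤ g.natDegree := by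
      intro g hg hglt
      rw [hφd]
      exact Nat.sInf_le ⟨g, hg, hglt, rfl⟩
    have hkey : IsKeyPol (ρ i) φ := tangent_keyPol (hval i) (hval j) hle hφm hφlt hmin
    have h1 : degOf (ρ i) ≤ φ.natDegree := Nat.sInf_le ⟨φ, hkey, rfl⟩
    have h2 : φ.natDegree ≤ f.natDegree := by
      have := hmin g₀ hg₀m hg₀lt
      omega
    omega
  refine ⟨fun f => hstab f, ?_, ?_, ?_, ?_, ?_, ?_, ?_⟩
  · -- ρ i f ≤ stableVal ρ f
    intro f i
    obtain ⟨i₀, hi₀⟩ := hstab f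
    rw [stableVal_eq ⟨i₀, hi₀⟩]
    calc ρ i f ≤ ρ (max i i₀) f := hmono (le_max_left _ _) f
      _ = ρ i₀ f := hi₀ _ (le_max_right _ _)
  · -- attainment
    intro f
    obtain ⟨i₀, hi₀⟩ := hstab f
    exact ⟨i₀, (stableVal_eq ⟨i₀, hi₀⟩).symm⟩
  · -- value of 1
    exact stableVal_eq ⟨Classical.arbitrary ι, fun j _ => (hval j).vone⟩
  · -- value of 0
    exact stableVal_eq ⟨Classical.arbitrary ι, fun j _ => (hval j).vzero⟩
  · -- multiplicativity
    intro f g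
    obtain ⟨i₁, h₁⟩ := hstab f
    obtain ⟨i₂, h₂⟩ := hstab g
    have hsf : stableVal ρ f = ρ i₁ f := stableVal_eq ⟨i₁, h₁⟩
    have hsg : stableVal ρ g = ρ i₂ g := stableVal_eq ⟨i₂, h₂⟩
    have : IsStableVal ρ (f * g) (ρ i₁ f + ρ i₂ g) := by
      refine ⟨max i₁ i₂, fun j hj => ?_⟩
      rw [(hval j).vmul, h₁ j (le_trans (le_max_left _ _) hj),
        h₂ j (le_trans (le_max_right _ _) hj)]
    simp only []
    rw [stableVal_eq this, hsf, hsg]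
  · -- ultrametric inequality
    intro f g
    obtain ⟨i₁, h₁⟩ := hstab f
    obtain ⟨i₂, h₂⟩ := hstab g
    obtain ⟨i₃, h₃⟩ := hstab (f + g)
    have hsf : stableVal ρ f = ρ i₁ f := stableVal_eq ⟨i₁, h₁⟩
    have hsg : stableVal ρ g = ρ i₂ g := stableVal_eq ⟨i₂, h₂⟩
    have hsfg : stableVal ρ (f + g) = ρ i₃ (f + g) := stableVal_eq ⟨i₃, h₃⟩
    set j := max (max i₁ i₂) i₃ with hj
    simp only []
    rw [hsf, hsg, hsfg, ← h₁ j (le_trans (le_max_left _ _) (le_max_left _ _)),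
      ← h₂ j (le_trans (le_max_right _ _) (le_max_left _ _)), ← h₃ j (le_max_right _ _)]
    exact (hval j).vadd f g
  · -- restriction to K
    intro a
    exact stableVal_eq ⟨Classical.arbitrary ι, fun j _ => (hval j).vC a⟩
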